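/- Let φ = (1+√5)/2 and A = {1, φ, φ², φ³}. Then |A+A| = 9 and |AA| = 7; hence (9,7) ∈ SPP_{ℝ₊}(4) while (by the Sidon Exclusion Zone theorem over the integers) (9,7) ∉ SPP(4), so SPP(4) ≠ SPP_{ℝ₊}(4). -/

import Mathlib

open Finset Pointwise

def SPP (n : ℕ) : Set (ℕ × ℕ) :=
  {p | ∃ A : Finset ℕ, (∀ a ∈ A, 0 < a) ∧ A.card = n ∧ p = ((A + A).card, (A * A).card)}

def SPPR (n : ℕ) : Set (ℕ × ℕ) :=
  {p | ∃ A : Finset ℝ, (∀ a ∈ A, 0 < a) ∧ A.card = n ∧ p = ((A + A).card, (A * A).card)}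

lemma four_elems (A : Finset ℕ) (h4 : A.card = 4) :
    ∃ a b c d : ℕ, a < b ∧ b < c ∧ c < d ∧ A = {a, b, c, d} := by
  have hl := A.length_sort (· ≤ ·)
  have hs := (A.sortedLT_sort).pairwise
  have ht := A.sort_toFinset (· ≤ ·)
  rw [h4] at hl
  match hm : A.sort (· ≤ ·), hl with
  | [a, b, c, d], _ =>
    rw [hm] at hs ht
    simp [List.pairwise_cons] at hs
    refine ⟨a, b, c, d, hs.1.1, hs.2.1.1, hs.2.2, ?_⟩
    rw [← ht]; ext x; simp

lemma add_expand (a b c d : ℕ) :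
    ({a, b, c, d} : Finset ℕ) + {a, b, c, d} =
      {a+a, a+b, a+c, a+d, b+b, b+c, b+d, c+c, c+d, d+d} := by
  ext x
  simp only [Finset.mem_add, mem_insert, mem_singleton]
  constructor
  · rintro ⟨y, hy, z, hz, rfl⟩
    rcases hy with rfl | rfl | rfl | rfl <;> rcases hz with rfl | rfl | rfl | rfl <;> omega
  · rintro (rfl | rfl | rfl | rfl | rfl | rfl | rfl | rfl | rfl | rfl)
    exacts [⟨a, by tauto, a, by tauto, rfl⟩, ⟨a, by tauto, b, by tauto, rfl⟩,
      ⟨a, by tauto, c, by tauto, rfl⟩, ⟨a, by tauto, d, by tauto, rfl⟩,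
      ⟨b, by tauto, b, by tauto, rfl⟩, ⟨b, by tauto, c, by tauto, rfl⟩,
      ⟨b, by tauto, d, by tauto, rfl⟩, ⟨c, by tauto, c, by tauto, rfl⟩,
      ⟨c, by tauto, d, by tauto, rfl⟩, ⟨d, by tauto, d, by tauto, rfl⟩]

lemma mul_expand (a b c d : ℕ) :
    ({a, b, c, d} : Finset ℕ) * {a, b, c, d} =
      {a*a, a*b, a*c, a*d, b*b, b*c, b*d, c*c, c*d, d*d} := by
  ext x
  simp only [Finset.mem_mul, mem_insert, mem_singleton]
  constructor
  · rintro ⟨y, hy, z, hz, rfl⟩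
    rcases hy with rfl | rfl | rfl | rfl <;> rcases hz with rfl | rfl | rfl | rfl <;>
      simp [mul_comm] <;> tauto
  · rintro (rfl | rfl | rfl | rfl | rfl | rfl | rfl | rfl | rfl | rfl)
    exacts [⟨a, by tauto, a, by tauto, rfl⟩, ⟨a, by tauto, b, by tauto, rfl⟩,
      ⟨a, by tauto, c, by tauto, rfl⟩, ⟨a, by tauto, d, by tauto, rfl⟩,
      ⟨b, by tauto, b, by tauto, rfl⟩, ⟨b, by tauto, c, by tauto, rfl⟩,
      ⟨b, by tauto, d, by tauto, rfl⟩, ⟨c, by tauto, c, by tauto, rfl⟩,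
      ⟨c, by tauto, d, by tauto, rfl⟩, ⟨d, by tauto, d, by tauto, rfl⟩]

lemma add_key (a b c d : ℕ) (hab : a < b) (hbc : b < c) (hcd : c < d)
    (h : ({a+a, a+b, a+c, a+d, b+b, b+c, b+d, c+c, c+d, d+d} : Finset ℕ).card = 9) :
    b+b=a+c ∨ b+b=a+d ∨ b+c=a+d ∨ c+c=a+d ∨ c+c=b+d := by
  by_contra hc
  push_neg at hc
  obtain ⟨h1, h2, h3, h4, h5⟩ := hc
  have h10 : ({a+a, a+b, a+c, a+d, b+b, b+c, b+d, c+c, c+d, d+d} : Finset ℕ).card = 10 := by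
    rw [card_insert_of_notMem (by simp; omega), card_insert_of_notMem (by simp; omega),
      card_insert_of_notMem (by simp; omega), card_insert_of_notMem (by simp; omega),
      card_insert_of_notMem (by simp; omega), card_insert_of_notMem (by simp; omega),
      card_insert_of_notMem (by simp; omega), card_insert_of_notMem (by simp; omega),
      card_insert_of_notMem (by simp; omega), card_singleton]
  omega

lemma mul_key_lin (paa pab pac pad pbb pbc pbd pcc pcd pdd : ℕ)
    (o1 : paa < pab) (o2 : pab < pac) (o3 : pac < pad) (o4 : pad < pbd) (o5 : pbd < pcd)
    (o6 : pcd < pdd) (o7 : pab < pbb) (o8 : pbb < pbc) (o9 : pbc < pbd) (o10 : pac < pbc)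
    (o11 : pbc < pcc) (o12 : pcc < pcd)
    (h : ({paa, pab, pac, pad, pbb, pbc, pbd, pcc, pcd, pdd} : Finset ℕ).card = 7) :
    pbb = pac ∧ pbc = pad ∧ pcc = pbd := by
  have hre : ({paa, pab, pac, pad, pbb, pbc, pbd, pcc, pcd, pdd} : Finset ℕ)
      = insert paa (insert pab (insert pcd (insert pdd
          ({pac, pad, pbb, pbc, pbd, pcc} : Finset ℕ)))) := by
    ext x; simp; omega
  rw [hre] at h
  rw [card_insert_of_notMem (by simp; omega), card_insert_of_notMem (by simp; omega),
    card_insert_of_notMem (by simp; omega), card_insert_of_notMem (by simp; omega)] at h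
  have hmid : ({pac, pad, pbb, pbc, pbd, pcc} : Finset ℕ).card = 3 := by omega
  have hsub : ({pac, pad, pbd} : Finset ℕ) ⊆ {pac, pad, pbb, pbc, pbd, pcc} := by
    intro x hx; simp at hx ⊢; tauto
  have h3 : ({pac, pad, pbd} : Finset ℕ).card = 3 := by
    rw [card_insert_of_notMem (by simp; omega), card_insert_of_notMem (by simp; omega),
      card_singleton]
  have heq : ({pac, pad, pbd} : Finset ℕ) = {pac, pad, pbb, pbc, pbd, pcc} :=
    eq_of_subset_of_card_le hsub (by omega)
  have m1 : pbb ∈ ({pac, pad, pbd} : Finset ℕ) := by rw [heq]; simp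
  have m2 : pbc ∈ ({pac, pad, pbd} : Finset ℕ) := by rw [heq]; simp
  have m3 : pcc ∈ ({pac, pad, pbd} : Finset ℕ) := by rw [heq]; simp
  simp at m1 m2 m3
  omega

lemma no_nat_example (a b c d : ℕ) (ha : 0 < a) (hab : a < b) (hbc : b < c) (hcd : c < d)
    (e1 : b*b = a*c) (e2 : b*c = a*d) (e3 : c*c = b*d)
    (hadd : b+b=a+c ∨ b+b=a+d ∨ b+c=a+d ∨ c+c=a+d ∨ c+c=b+d) : False := by
  have ha' : (0:ℤ) < a := by exact_mod_cast ha
  have hab' : (a:ℤ) < b := by exact_mod_cast hab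
  have hbc' : (b:ℤ) < c := by exact_mod_cast hbc
  have hcd' : (c:ℤ) < d := by exact_mod_cast hcd
  have e1' : (b:ℤ)*b = a*c := by exact_mod_cast e1
  have e2' : (b:ℤ)*c = a*d := by exact_mod_cast e2
  have e3' : (c:ℤ)*c = b*d := by exact_mod_cast e3
  rcases hadd with h | h | h | h | h
  · have h' : (b:ℤ)+b = a+c := by exact_mod_cast h
    nlinarith [mul_pos (by linarith : (0:ℤ) < (c:ℤ) - a) (by linarith : (0:ℤ) < (c:ℤ) - a)]
  · have h' : (b:ℤ)+b = a+d := by exact_mod_cast h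
    have E : 2*(a:ℤ)*a*b = a*a*a + b*b*b := by
      have hh : (a:ℤ)*a*(b+b) = a*a*(a+d) := by rw [h']
      have had : (a:ℤ)*a*d = b*b*b := by
        calc (a:ℤ)*a*d = a*(a*d) := by ring
        _ = a*(b*c) := by rw [e2']
        _ = b*(a*c) := by ring
        _ = b*(b*b) := by rw [e1']
        _ = b*b*b := by ring
      linear_combination hh + had
    have h1 : (0:ℤ) < (b:ℤ) - a := by linarith
    have h2 : (0:ℤ) < (b:ℤ)*b + a*b - a*a := by nlinarith
    nlinarith [mul_pos h1 h2]
  · have h' : (b:ℤ)+c = a+d := by exact_mod_cast h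
    have haux : (a:ℤ)*(b+c) = a*(a+d) := by rw [h']
    nlinarith [mul_pos (by linarith : (0:ℤ) < (b:ℤ) - a) (by linarith : (0:ℤ) < (c:ℤ) - a)]
  · have h' : (c:ℤ)+c = a+d := by exact_mod_cast h
    have had : (a:ℤ)*d*d = c*c*c := by
      calc (a:ℤ)*d*d = (a*d)*d := by ring
      _ = (b*c)*d := by rw [e2']
      _ = c*(b*d) := by ring
      _ = c*(c*c) := by rw [e3']
      _ = c*c*c := by ring
    have E : 2*(c:ℤ)*d*d = c*c*c + d*d*d := by
      have hh : (d:ℤ)*d*(c+c) = d*d*(a+d) := by rw [h']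
      linear_combination hh + had
    have hfac : ((d:ℤ) - c) * ((d:ℤ)*d - c*d - c*c) = 0 := by ring_nf; linarith [E]
    have hz : (d:ℤ)*d - c*d - c*c = 0 := by
      rcases mul_eq_zero.mp hfac with h0 | h0
      · exfalso; linarith
      · exact h0
    have hdd : d*d = c*d + c*c := by
      have : ((d*d : ℕ) : ℤ) = ((c*d + c*c : ℕ) : ℤ) := by push_cast; linarith
      exact_mod_cast this
    have hc0 : 0 < c := by omega
    have hd0 : 0 < d := by omega
    set g := Nat.gcd c d with hg
    have hg0 : 0 < g := Nat.gcd_pos_of_pos_left _ hc0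
    obtain ⟨u, hu⟩ : g ∣ c := Nat.gcd_dvd_left c d
    obtain ⟨v, hv⟩ : g ∣ d := Nat.gcd_dvd_right c d
    have hu' : c / g = u := by rw [hu]; exact Nat.mul_div_cancel_left _ hg0
    have hv' : d / g = v := by rw [hv]; exact Nat.mul_div_cancel_left _ hg0
    have hcop : Nat.Coprime u v := by
      rw [← hu', ← hv']; exact Nat.coprime_div_gcd_div_gcd hg0
    have heq : v*v = u*v + u*u := by
      have h2 : g*g*(v*v) = g*g*(u*v + u*u) := by
        have hdd2 := hdd
        rw [hu, hv] at hdd2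
        linear_combination hdd2
      exact Nat.eq_of_mul_eq_mul_left (Nat.mul_pos hg0 hg0) h2
    have huv : u < v := by
      have : g*u < g*v := by rw [← hu, ← hv]; exact hcd
      exact lt_of_mul_lt_mul_left this (Nat.zero_le g)
    have hdvd : u ∣ v*v := ⟨v + u, by rw [heq]; ring⟩
    have hu1 : u = 1 := (hcop.mul_right hcop).eq_one_of_dvd hdvd
    rw [hu1] at heq huv
    have h2v : 2 ≤ v := huv
    have hle : 2*v ≤ v*v := Nat.mul_le_mul_right v h2v
    simp at heq
    omega
  · have h' : (c:ℤ)+c = b+d := by exact_mod_cast h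
    nlinarith [mul_pos (by linarith : (0:ℤ) < (d:ℤ) - b) (by linarith : (0:ℤ) < (d:ℤ) - b)]

set_option maxHeartbeats 1000000 in
lemma not_spp : (9, 7) ∉ SPP 4 := by
  rintro ⟨B, hBpos, hB4, hpair⟩
  obtain ⟨a, b, c, d, hab, hbc, hcd, hBeq⟩ := four_elems B hB4
  have ha : 0 < a := hBpos a (by rw [hBeq]; simp)
  have hpair' := hpair
  simp only [Prod.mk.injEq] at hpair'
  obtain ⟨hs, hm⟩ := hpair'
  rw [hBeq, add_expand] at hs
  rw [hBeq, mul_expand] at hm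
  have hb : 0 < b := by omega
  have hc : 0 < c := by omega
  have hd : 0 < d := by omega
  have o1 : a*a < a*b := mul_lt_mul_of_pos_left hab ha
  have o2 : a*b < a*c := mul_lt_mul_of_pos_left hbc ha
  have o3 : a*c < a*d := mul_lt_mul_of_pos_left hcd ha
  have o4 : a*d < b*d := mul_lt_mul_of_pos_right hab hd
  have o5 : b*d < c*d := mul_lt_mul_of_pos_right hbc hd
  have o6 : c*d < d*d := mul_lt_mul_of_pos_right hcd hd
  have o7 : a*b < b*b := mul_lt_mul_of_pos_right hab hb
  have o8 : b*b < b*c := mul_lt_mul_of_pos_left hbc hb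
  have o9 : b*c < b*d := mul_lt_mul_of_pos_left hcd hb
  have o10 : a*c < b*c := mul_lt_mul_of_pos_right hab hc
  have o11 : b*c < c*c := mul_lt_mul_of_pos_right hbc hc
  have o12 : c*c < c*d := mul_lt_mul_of_pos_left hcd hc
  obtain ⟨e1, e2, e3⟩ := mul_key_lin (a*a) (a*b) (a*c) (a*d) (b*b) (b*c) (b*d) (c*c) (c*d) (d*d)
    o1 o2 o3 o4 o5 o6 o7 o8 o9 o10 o11 o12 hm.symm
  have hadd := add_key a b c d hab hbc hcd hs.symm
  exact no_nat_example a b c d ha hab hbc hcd e1 e2 e3 hadd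

set_option maxHeartbeats 4000000 in
theorem stmt_17 (φ : ℝ) (hφ : φ = (1 + Real.sqrt 5) / 2)
    (A : Finset ℝ) (hA : A = {1, φ, φ ^ 2, φ ^ 3}) :
    (A + A).card = 9 ∧ (A * A).card = 7 ∧
      (9, 7) ∈ SPPR 4 ∧ (9, 7) ∉ SPP 4 ∧ SPP 4 ≠ SPPR 4 := by
  have hs0 : (0:ℝ) ≤ 5 := by norm_num
  have hsq5 : Real.sqrt 5 ^ 2 = 5 := Real.sq_sqrt hs0
  have hsnn : (0:ℝ) ≤ Real.sqrt 5 := Real.sqrt_nonneg 5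
  have hs1 : (2.2:ℝ) < Real.sqrt 5 := by nlinarith
  have hs2 : Real.sqrt 5 < 2.4 := by nlinarith
  have hφ1 : (1.6:ℝ) < φ := by rw [hφ]; linarith
  have hφ2 : φ < (1.7:ℝ) := by rw [hφ]; linarith
  have p2 : φ^2 = φ + 1 := by rw [hφ]; linear_combination hsq5 / 4
  have p3 : φ^3 = 2*φ + 1 := by linear_combination (φ+1)*p2
  have p4 : φ^4 = 3*φ + 2 := by linear_combination (φ^2+φ+2)*p2
  have p5 : φ^5 = 5*φ + 3 := by linear_combination (φ^3+φ^2+2*φ+3)*p2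
  have p6 : φ^6 = 8*φ + 5 := by linear_combination (φ^4+φ^3+2*φ^2+3*φ+5)*p2
  have hAadd : A + A = ({(1:ℝ)+1, 1+φ, φ+φ, 1+φ^2, φ+φ^2, 1+φ^3, φ+φ^3, φ^2+φ^3, φ^3+φ^3} : Finset ℝ) := by
    rw [hA]
    ext x
    simp only [Finset.mem_add, mem_insert, mem_singleton]
    constructor
    · rintro ⟨y, hy, z, hz, rfl⟩
      rcases hy with rfl | rfl | rfl | rfl <;> rcases hz with rfl | rfl | rfl | rfl <;>
      first
      | (left; linarith)
      | (right; left; linarith)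
      | (right; right; left; linarith)
      | (right; right; right; left; linarith)
      | (right; right; right; right; left; linarith)
      | (right; right; right; right; right; left; linarith)
      | (right; right; right; right; right; right; left; linarith)
      | (right; right; right; right; right; right; right; left; linarith)
      | (right; right; right; right; right; right; right; right; linarith)
    · rintro (rfl | rfl | rfl | rfl | rfl | rfl | rfl | rfl | rfl)
      exacts [⟨1, by tauto, 1, by tauto, rfl⟩, ⟨1, by tauto, φ, by tauto, rfl⟩,
        ⟨φ, by tauto, φ, by tauto, rfl⟩, ⟨1, by tauto, φ^2, by tauto, rfl⟩,
        ⟨φ, by tauto, φ^2, by tauto, rfl⟩, ⟨1, by tauto, φ^3, by tauto, rfl⟩,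
        ⟨φ, by tauto, φ^3, by tauto, rfl⟩, ⟨φ^2, by tauto, φ^3, by tauto, rfl⟩,
        ⟨φ^3, by tauto, φ^3, by tauto, rfl⟩]
  have hAmul : A * A = ({(1:ℝ), φ, φ^2, φ^3, φ^4, φ^5, φ^6} : Finset ℝ) := by
    rw [hA]
    ext x
    simp only [Finset.mem_mul, mem_insert, mem_singleton]
    constructor
    · rintro ⟨y, hy, z, hz, rfl⟩
      rcases hy with rfl | rfl | rfl | rfl <;> rcases hz with rfl | rfl | rfl | rfl <;>
      first
      | (left; ring1)
      | (right; left; ring1)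
      | (right; right; left; ring1)
      | (right; right; right; left; ring1)
      | (right; right; right; right; left; ring1)
      | (right; right; right; right; right; left; ring1)
      | (right; right; right; right; right; right; ring1)
    · rintro (h | h | h | h | h | h | h)
      exacts [⟨1, by tauto, 1, by tauto, by rw [h]; ring⟩, ⟨1, by tauto, φ, by tauto, by rw [h]; ring⟩,
        ⟨1, by tauto, φ^2, by tauto, by rw [h]; ring⟩, ⟨1, by tauto, φ^3, by tauto, by rw [h]; ring⟩,
        ⟨φ, by tauto, φ^3, by tauto, by rw [h]; ring⟩, ⟨φ^2, by tauto, φ^3, by tauto, by rw [h]; ring⟩,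
        ⟨φ^3, by tauto, φ^3, by tauto, by rw [h]; ring⟩]
  have c9 : ({(1:ℝ)+1, 1+φ, φ+φ, 1+φ^2, φ+φ^2, 1+φ^3, φ+φ^3, φ^2+φ^3, φ^3+φ^3} : Finset ℝ).card = 9 := by
    rw [Finset.card_insert_of_notMem (by simp only [Finset.mem_insert, Finset.mem_singleton]; push_neg; exact ⟨ne_of_lt (by linarith), ne_of_lt (by linarith), ne_of_lt (by linarith), ne_of_lt (by linarith), ne_of_lt (by linarith), ne_of_lt (by linarith), ne_of_lt (by linarith), ne_of_lt (by linarith)⟩),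
      Finset.card_insert_of_notMem (by simp only [Finset.mem_insert, Finset.mem_singleton]; push_neg; exact ⟨ne_of_lt (by linarith), ne_of_lt (by linarith), ne_of_lt (by linarith), ne_of_lt (by linarith), ne_of_lt (by linarith), ne_of_lt (by linarith), ne_of_lt (by linarith)⟩),
      Finset.card_insert_of_notMem (by simp only [Finset.mem_insert, Finset.mem_singleton]; push_neg; exact ⟨ne_of_lt (by linarith), ne_of_lt (by linarith), ne_of_lt (by linarith), ne_of_lt (by linarith), ne_of_lt (by linarith), ne_of_lt (by linarith)⟩),
      Finset.card_insert_of_notMem (by simp only [Finset.mem_insert, Finset.mem_singleton]; push_neg; exact ⟨ne_of_lt (by linarith), ne_of_lt (by linarith), ne_of_lt (by linarith), ne_of_lt (by linarith), ne_of_lt (by linarith)⟩),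
      Finset.card_insert_of_notMem (by simp only [Finset.mem_insert, Finset.mem_singleton]; push_neg; exact ⟨ne_of_lt (by linarith), ne_of_lt (by linarith), ne_of_lt (by linarith), ne_of_lt (by linarith)⟩),
      Finset.card_insert_of_notMem (by simp only [Finset.mem_insert, Finset.mem_singleton]; push_neg; exact ⟨ne_of_lt (by linarith), ne_of_lt (by linarith), ne_of_lt (by linarith)⟩),
      Finset.card_insert_of_notMem (by simp only [Finset.mem_insert, Finset.mem_singleton]; push_neg; exact ⟨ne_of_lt (by linarith), ne_of_lt (by linarith)⟩),
      Finset.card_insert_of_notMem (by simp only [Finset.mem_singleton]; exact ne_of_lt (by linarith)),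
      Finset.card_singleton]
  have c7 : ({(1:ℝ), φ, φ^2, φ^3, φ^4, φ^5, φ^6} : Finset ℝ).card = 7 := by
    rw [Finset.card_insert_of_notMem (by simp only [Finset.mem_insert, Finset.mem_singleton]; push_neg; exact ⟨ne_of_lt (by linarith), ne_of_lt (by linarith), ne_of_lt (by linarith), ne_of_lt (by linarith), ne_of_lt (by linarith), ne_of_lt (by linarith)⟩),
      Finset.card_insert_of_notMem (by simp only [Finset.mem_insert, Finset.mem_singleton]; push_neg; exact ⟨ne_of_lt (by linarith), ne_of_lt (by linarith), ne_of_lt (by linarith), ne_of_lt (by linarith), ne_of_lt (by linarith)⟩),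
      Finset.card_insert_of_notMem (by simp only [Finset.mem_insert, Finset.mem_singleton]; push_neg; exact ⟨ne_of_lt (by linarith), ne_of_lt (by linarith), ne_of_lt (by linarith), ne_of_lt (by linarith)⟩),
      Finset.card_insert_of_notMem (by simp only [Finset.mem_insert, Finset.mem_singleton]; push_neg; exact ⟨ne_of_lt (by linarith), ne_of_lt (by linarith), ne_of_lt (by linarith)⟩),
      Finset.card_insert_of_notMem (by simp only [Finset.mem_insert, Finset.mem_singleton]; push_neg; exact ⟨ne_of_lt (by linarith), ne_of_lt (by linarith)⟩),
      Finset.card_insert_of_notMem (by simp only [Finset.mem_singleton]; exact ne_of_lt (by linarith)),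
      Finset.card_singleton]
  have cA : A.card = 4 := by
    rw [hA]
    rw [Finset.card_insert_of_notMem (by simp only [Finset.mem_insert, Finset.mem_singleton]; push_neg; exact ⟨ne_of_lt (by linarith), ne_of_lt (by linarith), ne_of_lt (by linarith)⟩),
      Finset.card_insert_of_notMem (by simp only [Finset.mem_insert, Finset.mem_singleton]; push_neg; exact ⟨ne_of_lt (by linarith), ne_of_lt (by linarith)⟩),
      Finset.card_insert_of_notMem (by simp only [Finset.mem_singleton]; exact ne_of_lt (by linarith)),
      Finset.card_singleton]
  have hadd9 : (A + A).card = 9 := by rw [hAadd]; exact c9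
  have hmul7 : (A * A).card = 7 := by rw [hAmul]; exact c7
  have hpos : ∀ x ∈ A, (0:ℝ) < x := by
    intro x hx
    rw [hA] at hx
    simp only [mem_insert, mem_singleton] at hx
    rcases hx with rfl | rfl | rfl | rfl <;> linarith
  have hmemR : (9, 7) ∈ SPPR 4 := ⟨A, hpos, cA, by rw [hadd9, hmul7]⟩
  refine ⟨hadd9, hmul7, hmemR, not_spp, ?_⟩
  intro hcontra
  exact not_spp (hcontra ▸ hmemR)
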